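/- Let X be a random variable with Gamma distribution of shape α > 0 and rate β > 0. Then for every a with 0 ≤ a ≤ α/β, the left-tail probability satisfies P(X ≤ a) ≤ (aβ/α)^α · exp(α − aβ). -/

import Mathlib

open Real MeasureTheory ProbabilityTheory

/-- Left-tail bound for the Gamma distribution: if `X ∼ Gamma(α, β)` with shape `α > 0`
and rate `β > 0`, then for every `a` with `0 ≤ a ≤ α/β`,
`P(X ≤ a) ≤ (aβ/α)^α · exp(α − aβ)`. -/
theorem gamma_left_tail_bound (α β : ℝ) (hα : 0 < α) (hβ : 0 < β)
    (a : ℝ) (ha : 0 ≤ a) (haub : a ≤ α / β) :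
    gammaMeasure α β (Set.Iic a) ≤
      ENNReal.ofReal ((a * β / α) ^ α * Real.exp (α - a * β)) := by
  rcases eq_or_lt_of_le ha with rfl | ha
  · -- a = 0 case: the measure of Iic 0 is zero
    have h0 : gammaMeasure α β (Set.Iic 0) = 0 := by
      rw [gammaMeasure, withDensity_apply _ measurableSet_Iic]
      have : (Set.Iic (0:ℝ)) =ᵐ[volume] Set.Iio 0 := Iio_ae_eq_Iic.symm
      rw [setLIntegral_congr this]
      rw [setLIntegral_congr_fun measurableSet_Iio
        (fun x (hx : x < 0) ↦ gammaPDF_of_neg hx)]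
      simp
    rw [h0]
    exact zero_le
  · set b : ℝ := α / a with hb
    have hbpos : 0 < b := div_pos hα ha
    have hab : a * b = α := by rw [hb]; field_simp
    have haβ : a * β ≤ α := (le_div_iff₀ hβ).mp haub
    have hβb : β ≤ b := by
      rw [hb, le_div_iff₀ ha]
      linarith
    set C : ℝ := (a * β / α) ^ α * Real.exp (α - a * β) with hC
    have hCnn : 0 ≤ C := by
      apply mul_nonneg _ (Real.exp_pos _).le
      exact Real.rpow_nonneg (by positivity) _
    have hΓ : 0 < Real.Gamma α := Real.Gamma_pos_of_pos hα
    -- key coefficient identity: C * b^α = β^α * exp (α - a*β)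
    have hkey : (a * β / α) ^ α * b ^ α = β ^ α := by
      rw [← Real.mul_rpow (by positivity) hbpos.le]
      congr 1
      field_simp [hb]; exact hab
    have hmeas : Measurable (gammaPDF α b) := (measurable_gammaPDFReal α b).ennreal_ofReal
    -- pointwise bound on Iic a
    have hpt : ∀ x ∈ Set.Iic a, gammaPDF α β x ≤
        ENNReal.ofReal C * gammaPDF α b x := by
      intro x hx
      rcases lt_or_ge x 0 with hx0 | hx0
      · rw [gammaPDF_of_neg hx0]; exact zero_le
      · rw [gammaPDF_of_nonneg hx0, gammaPDF_of_nonneg hx0,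
          ← ENNReal.ofReal_mul hCnn]
        apply ENNReal.ofReal_le_ofReal
        have hxα : (0:ℝ) ≤ x ^ (α - 1) := Real.rpow_nonneg hx0 _
        have hexp : Real.exp (-(β * x)) ≤ Real.exp (α - a * β) * Real.exp (-(b * x)) := by
          rw [← Real.exp_add]
          apply Real.exp_le_exp.mpr
          have hxle : x ≤ a := hx
          nlinarith [mul_le_mul_of_nonneg_left hxle (sub_nonneg.mpr hβb)]
        calc β ^ α / Real.Gamma α * x ^ (α - 1) * Real.exp (-(β * x))
            ≤ β ^ α / Real.Gamma α * x ^ (α - 1) *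
              (Real.exp (α - a * β) * Real.exp (-(b * x))) := by
              apply mul_le_mul_of_nonneg_left hexp (by positivity)
          _ = C * (b ^ α / Real.Gamma α * x ^ (α - 1) * Real.exp (-(b * x))) := by
              rw [hC, ← hkey]; ring
    -- integrate
    calc gammaMeasure α β (Set.Iic a)
        = ∫⁻ x in Set.Iic a, gammaPDF α β x := by
          rw [gammaMeasure, withDensity_apply _ measurableSet_Iic]
      _ ≤ ∫⁻ x in Set.Iic a, ENNReal.ofReal C * gammaPDF α b x := by
          apply setLIntegral_mono
            (measurable_const.mul hmeas) hpt
      _ = ENNReal.ofReal C * ∫⁻ x in Set.Iic a, gammaPDF α b x := by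
          rw [lintegral_const_mul _ hmeas]
      _ ≤ ENNReal.ofReal C * ∫⁻ x, gammaPDF α b x := by
          gcongr
          exact Measure.restrict_le_self
      _ = ENNReal.ofReal C := by
          rw [lintegral_gammaPDF_eq_one hα hbpos, mul_one]
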